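/- Let A₂ be a 2×2 matrix of rank two with non-zero entries, and let p₀, p₁ ∈ ℝ² satisfy (p₀,p₁) ∈ (ℝ²)² − Σ, where Σ ⊂ (ℝ²)² is the hypersurface defined by (x₀−x₁)(y₀−y₁) = 0 in the standard coordinates ((x₀,y₀),(x₁,y₁)). Then for any positive real numbers a, b with a ≠ b, there exists a point q = (q₀,q₁) ∈ ℝ² such that (q,(0,0)) ∈ (ℝ²)² − Σ and G_{(p₀,p₁,A₂)} is A-equivalent to the mapping F_q : ℝ² → ℝ² defined by F_q(x,y) = ((x−q₀)² + (y−q₁)², ax² + by²). -/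

import Mathlib

/-- A `C^∞` diffeomorphism of a normed space onto itself. -/
def IsSmoothDiffeo {E : Type*} [NormedAddCommGroup E] [NormedSpace ℝ E] (φ : E → E) : Prop :=
  ContDiff ℝ (⊤ : ℕ∞) φ ∧
    ∃ φi : E → E, ContDiff ℝ (⊤ : ℕ∞) φi ∧ (∀ x, φi (φ x) = x) ∧ (∀ y, φ (φi y) = y)

/-- `f` and `g` are `𝒜`-equivalent: `ψ ∘ f ∘ φ = g` for some `C^∞` diffeomorphisms
`φ` of the source and `ψ` of the target. -/
def AEquiv {E F : Type*} [NormedAddCommGroup E] [NormedSpace ℝ E]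
    [NormedAddCommGroup F] [NormedSpace ℝ F] (f g : E → F) : Prop :=
  ∃ (φ : E → E) (ψ : F → F), IsSmoothDiffeo φ ∧ IsSmoothDiffeo ψ ∧ ψ ∘ f ∘ φ = g

/-- The generalized distance-squared mapping `G_{(p₀,p₁,A)} : ℝ² → ℝ²`. -/
def genDistSqMap (p : Fin 2 → (Fin 2 → ℝ)) (A : Matrix (Fin 2) (Fin 2) ℝ)
    (x : Fin 2 → ℝ) : Fin 2 → ℝ :=
  fun i => ∑ j, A i j * (x j - p i j) ^ 2

lemma affine_isSmoothDiffeo (m₀₀ m₀₁ m₁₀ m₁₁ c₀ c₁ : ℝ) (h : m₀₀*m₁₁ - m₀₁*m₁₀ ≠ 0) :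
    IsSmoothDiffeo (fun y : Fin 2 → ℝ => ![m₀₀*y 0 + m₀₁*y 1 + c₀, m₁₀*y 0 + m₁₁*y 1 + c₁]) := by
  have hc : ∀ i : Fin 2, ContDiff ℝ (⊤:ℕ∞) fun y : Fin 2 → ℝ => y i :=
    fun i => contDiff_pi.1 contDiff_id i
  constructor
  · apply contDiff_pi.2
    intro i
    fin_cases i <;> simp <;>
      exact ((contDiff_const.mul (hc 0)).add (contDiff_const.mul (hc 1))).add contDiff_const
  · refine ⟨fun y => ![(m₁₁*(y 0 - c₀) - m₀₁*(y 1 - c₁))/(m₀₀*m₁₁ - m₀₁*m₁₀),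
      (m₀₀*(y 1 - c₁) - m₁₀*(y 0 - c₀))/(m₀₀*m₁₁ - m₀₁*m₁₀)], ?_, ?_, ?_⟩
    · apply contDiff_pi.2
      intro i
      fin_cases i <;> simp <;>
        exact (((contDiff_const.mul ((hc _).sub contDiff_const)).sub
          (contDiff_const.mul ((hc _).sub contDiff_const))).div_const _)
    · intro x
      funext i
      fin_cases i <;> (simp; rw [div_eq_iff h]; ring)
    · intro y
      funext i
      have h' : m₁₁ * m₀₀ - m₁₀ * m₀₁ ≠ 0 := by rwa [mul_comm m₁₁, mul_comm m₁₀]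
      fin_cases i <;> simp <;> field_simp [h, h'] <;> ring

lemma aux_key_scalar (A00 A01 A10 A11 p00 p01 p10 p11 a b : ℝ)
    (hA00 : A00 ≠ 0) (hA01 : A01 ≠ 0) (hA10 : A10 ≠ 0) (hA11 : A11 ≠ 0)
    (hd : A00*A11 - A01*A10 ≠ 0)
    (ha : a ≠ 0) (hb : b ≠ 0) (hab : b - a ≠ 0)
    (hp0 : p00 - p10 ≠ 0) (hp1 : p01 - p11 ≠ 0) :
    ∃ q0 q1 : ℝ, q0 ≠ 0 ∧ q1 ≠ 0 ∧
      AEquiv (fun x : Fin 2 → ℝ =>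
          ![A00*(x 0 - p00)^2 + A01*(x 1 - p01)^2, A10*(x 0 - p10)^2 + A11*(x 1 - p11)^2])
        (fun x : Fin 2 → ℝ => ![(x 0 - q0)^2 + (x 1 - q1)^2, a*x 0^2 + b*x 1^2]) := by
  obtain ⟨m00, hm00⟩ : ∃ v : ℝ, v = (A11 - A10)/(A00*A11 - A01*A10) := ⟨_, rfl⟩
  obtain ⟨m01, hm01⟩ : ∃ v : ℝ, v = (A00 - A01)/(A00*A11 - A01*A10) := ⟨_, rfl⟩
  obtain ⟨m10, hm10⟩ : ∃ v : ℝ, v = (a*A11 - b*A10)/(A00*A11 - A01*A10) := ⟨_, rfl⟩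
  obtain ⟨m11, hm11⟩ : ∃ v : ℝ, v = (b*A00 - a*A01)/(A00*A11 - A01*A10) := ⟨_, rfl⟩
  obtain ⟨β, hβ⟩ : ∃ v : ℝ, v = (m10*A00*p00 + m11*A10*p10)/a := ⟨_, rfl⟩
  obtain ⟨δ, hδ⟩ : ∃ v : ℝ, v = (m10*A01*p01 + m11*A11*p11)/b := ⟨_, rfl⟩
  obtain ⟨q0, hq0⟩ : ∃ v : ℝ, v = (m00*A00*p00 + m01*A10*p10) - β := ⟨_, rfl⟩
  obtain ⟨q1, hq1⟩ : ∃ v : ℝ, v = (m00*A01*p01 + m01*A11*p11) - δ := ⟨_, rfl⟩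
  obtain ⟨d0, hd0⟩ : ∃ v : ℝ, v = q0^2 + q1^2 - (m00*(A00*(β-p00)^2 + A01*(δ-p01)^2)
      + m01*(A10*(β-p10)^2 + A11*(δ-p11)^2)) := ⟨_, rfl⟩
  obtain ⟨d1, hd1⟩ : ∃ v : ℝ, v = -(m10*(A00*(β-p00)^2 + A01*(δ-p01)^2)
      + m11*(A10*(β-p10)^2 + A11*(δ-p11)^2)) := ⟨_, rfl⟩
  have r1 : m00*A00 + m01*A10 = 1 := by
    rw [hm00, hm01]; rw [div_mul_eq_mul_div, div_mul_eq_mul_div, ← add_div, div_eq_iff hd]; ring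
  have r2 : m00*A01 + m01*A11 = 1 := by
    rw [hm00, hm01]; rw [div_mul_eq_mul_div, div_mul_eq_mul_div, ← add_div, div_eq_iff hd]; ring
  have r3 : m10*A00 + m11*A10 = a := by
    rw [hm10, hm11]; rw [div_mul_eq_mul_div, div_mul_eq_mul_div, ← add_div, div_eq_iff hd]; ring
  have r4 : m10*A01 + m11*A11 = b := by
    rw [hm10, hm11]; rw [div_mul_eq_mul_div, div_mul_eq_mul_div, ← add_div, div_eq_iff hd]; ring
  have hβa : a*β = m10*A00*p00 + m11*A10*p10 := by
    rw [hβ]; field_simp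
  have hδb : b*δ = m10*A01*p01 + m11*A11*p11 := by
    rw [hδ]; field_simp
  have s1 : m10*A00*(β-p00) + m11*A10*(β-p10) = 0 := by
    linear_combination β*r3 + hβa
  have s2 : m10*A01*(δ-p01) + m11*A11*(δ-p11) = 0 := by
    linear_combination δ*r4 + hδb
  have t1 : m00*A00*(β-p00) + m01*A10*(β-p10) = -q0 := by
    linear_combination β*r1 + hq0
  have t2 : m00*A01*(δ-p01) + m01*A11*(δ-p11) = -q1 := by
    linear_combination δ*r2 + hq1
  have hq0ne : q0 ≠ 0 := by
    have h : q0 = (b-a)*A00*A10*(p00-p10)/(a*(A00*A11 - A01*A10)) := by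
      rw [hq0, hβ, hm00, hm01, hm10, hm11]
      field_simp
      ring
    rw [h]
    exact div_ne_zero (mul_ne_zero (mul_ne_zero (mul_ne_zero hab hA00) hA10) hp0)
      (mul_ne_zero ha hd)
  have hq1ne : q1 ≠ 0 := by
    have h : q1 = (b-a)*A01*A11*(p01-p11)/(b*(A00*A11 - A01*A10)) := by
      rw [hq1, hδ, hm00, hm01, hm10, hm11]
      field_simp
      ring
    rw [h]
    exact div_ne_zero (mul_ne_zero (mul_ne_zero (mul_ne_zero hab hA01) hA11) hp1)
      (mul_ne_zero hb hd)
  have hmdet : m00*m11 - m01*m10 ≠ 0 := by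
    have h : m00*m11 - m01*m10 = (b-a)/(A00*A11 - A01*A10) := by
      rw [hm00, hm01, hm10, hm11]
      rw [div_mul_div_comm, div_mul_div_comm, div_sub_div_same, div_eq_div_iff (mul_ne_zero hd hd) hd]
      ring
    rw [h]
    exact div_ne_zero hab hd
  refine ⟨q0, q1, hq0ne, hq1ne,
    (fun x => ![1*x 0 + 0*x 1 + β, 0*x 0 + 1*x 1 + δ]),
    (fun y => ![m00*y 0 + m01*y 1 + d0, m10*y 0 + m11*y 1 + d1]),
    affine_isSmoothDiffeo 1 0 0 1 β δ (by norm_num),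
    affine_isSmoothDiffeo m00 m01 m10 m11 d0 d1 hmdet, ?_⟩
  funext x
  funext i
  fin_cases i
  · simp
    linear_combination (x 0)^2*r1 + (x 1)^2*r2 + (2*(x 0))*t1 + (2*(x 1))*t2 + hd0
  · simp
    linear_combination (x 0)^2*r3 + (x 1)^2*r4 + (2*(x 0))*s1 + (2*(x 1))*s2 + hd1

/-- for a rank-two `2×2` matrix `A₂` with non-zero entries and `(p₀,p₁)`
off the hypersurface `(x₀-x₁)(y₀-y₁)=0`, for any positive reals `a ≠ b` there is a
point `q = (q₀,q₁)` with `(q,(0,0))` off the hypersurface such that `G_{(p₀,p₁,A₂)}`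
is `𝒜`-equivalent to `F_q(x,y) = ((x-q₀)² + (y-q₁)², ax² + by²)`. -/
theorem genDistSqMap_AEquiv_Fq (p : Fin 2 → (Fin 2 → ℝ))
    (hp : (p 0 0 - p 1 0) * (p 0 1 - p 1 1) ≠ 0)
    (A₂ : Matrix (Fin 2) (Fin 2) ℝ) (hA₂rank : A₂.rank = 2) (hA₂ : ∀ i j, A₂ i j ≠ 0)
    (a b : ℝ) (ha : 0 < a) (hb : 0 < b) (hab : a ≠ b) :
    ∃ q : Fin 2 → ℝ, (q 0 - 0) * (q 1 - 0) ≠ 0 ∧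
      AEquiv (genDistSqMap p A₂)
        (fun x : Fin 2 → ℝ =>
          ![(x 0 - q 0) ^ 2 + (x 1 - q 1) ^ 2, a * x 0 ^ 2 + b * x 1 ^ 2]) := by
  -- determinant of A₂ is nonzero since rank = 2
  have hdet : A₂.det ≠ 0 := by
    intro h0
    obtain ⟨v, hv0, hAv⟩ := Matrix.exists_mulVec_eq_zero_iff.mpr h0
    have hker : v ∈ LinearMap.ker A₂.mulVecLin := by simpa using hAv
    have hkerne : LinearMap.ker A₂.mulVecLin ≠ ⊥ := by
      intro hbot
      rw [hbot, Submodule.mem_bot] at hker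
      exact hv0 hker
    have hkpos : 0 < Module.finrank ℝ (LinearMap.ker A₂.mulVecLin) := by
      rcases Nat.eq_zero_or_pos (Module.finrank ℝ (LinearMap.ker A₂.mulVecLin)) with h | h
      · exact absurd (Submodule.finrank_eq_zero.mp h) hkerne
      · exact h
    have hrn := LinearMap.finrank_range_add_finrank_ker A₂.mulVecLin
    have hfr : Module.finrank ℝ (Fin 2 → ℝ) = 2 := by simp
    have hrank : Module.finrank ℝ (LinearMap.range A₂.mulVecLin) = 2 := hA₂rank
    omega
  have hd : A₂ 0 0 * A₂ 1 1 - A₂ 0 1 * A₂ 1 0 ≠ 0 := by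
    rwa [Matrix.det_fin_two] at hdet
  have hp0 : p 0 0 - p 1 0 ≠ 0 := (mul_ne_zero_iff.mp hp).1
  have hp1 : p 0 1 - p 1 1 ≠ 0 := (mul_ne_zero_iff.mp hp).2
  obtain ⟨q0, q1, hq0, hq1, heq⟩ := aux_key_scalar (A₂ 0 0) (A₂ 0 1) (A₂ 1 0) (A₂ 1 1)
    (p 0 0) (p 0 1) (p 1 0) (p 1 1) a b (hA₂ 0 0) (hA₂ 0 1) (hA₂ 1 0) (hA₂ 1 1)
    hd ha.ne' hb.ne' (sub_ne_zero.mpr (Ne.symm hab)) hp0 hp1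
  refine ⟨![q0, q1], ?_, ?_⟩
  · simpa using mul_ne_zero hq0 hq1
  · have hG : genDistSqMap p A₂ = fun x : Fin 2 → ℝ =>
        ![A₂ 0 0*(x 0 - p 0 0)^2 + A₂ 0 1*(x 1 - p 0 1)^2,
          A₂ 1 0*(x 0 - p 1 0)^2 + A₂ 1 1*(x 1 - p 1 1)^2] := by
      funext x i
      fin_cases i <;> simp [genDistSqMap, Fin.sum_univ_two]
    rw [hG]
    simpa using heq
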